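/- If vertex u has an edge (u,v) ∈ E such that a valid lower bound on φ(v) strictly exceeds a valid upper bound on φ(u) (i.e., φ(v) > φ(u)), then u is not contained in any locally densest subgraph of G. -/
import Mathlib


open Finset

variable {V : Type*} [Fintype V] [DecidableEq V]

/-- Number of edges of `G` with both endpoints in `S`. -/
def edgeCount (G : SimpleGraph V) [DecidableRel G.Adj] (S : Finset V) : ℕ :=
  (G.edgeFinset.filter fun e => ∀ v ∈ e, v ∈ S).card

/-- Edge density |E(S)|/|S| of the induced subgraph G[S]. -/
noncomputable def density (G : SimpleGraph V) [DecidableRel G.Adj] (S : Finset V) : ℝ :=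
  (edgeCount G S : ℝ) / (S.card : ℝ)

/-- `G[S]` is ρ-compact: connected, and removing any nonempty `U ⊆ S`
removes at least `ρ * |U|` edges. -/
def IsCompactSub (G : SimpleGraph V) [DecidableRel G.Adj] (ρ : ℝ) (S : Finset V) : Prop :=
  0 ≤ ρ ∧ (G.induce (S : Set V)).Connected ∧
  ∀ U ⊆ S, U.Nonempty →
    ρ * (U.card : ℝ) ≤ (edgeCount G S : ℝ) - (edgeCount G (S \ U) : ℝ)

/-- `G[S]` is a locally densest subgraph: a maximal `density G S`-compact subgraph. -/
def IsLDS (G : SimpleGraph V) [DecidableRel G.Adj] (S : Finset V) : Prop :=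
  IsCompactSub G (density G S) S ∧
  ∀ S' : Finset V, S ⊂ S' → ¬ IsCompactSub G (density G S) S'

/-- The compact number of `u`: the largest ρ such that `u`
lies in a ρ-compact subgraph of `G`. -/
noncomputable def compactNum (G : SimpleGraph V) [DecidableRel G.Adj] (u : V) : ℝ :=
  sSup {ρ : ℝ | ∃ S : Finset V, u ∈ S ∧ IsCompactSub G ρ S}

set_option linter.unusedSectionVars false

lemma edgeCount_mono (G : SimpleGraph V) [DecidableRel G.Adj] {A B : Finset V} (h : A ⊆ B) :
    edgeCount G A ≤ edgeCount G B := by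
  apply card_le_card
  intro e he
  simp only [mem_filter] at he ⊢
  exact ⟨he.1, fun x hx => h (he.2 x hx)⟩

def remEdges (G : SimpleGraph V) [DecidableRel G.Adj] (A U : Finset V) : Finset (Sym2 V) :=
  G.edgeFinset.filter fun e => (∀ x ∈ e, x ∈ A) ∧ ∃ x ∈ e, x ∈ U

lemma edgeCount_sdiff (G : SimpleGraph V) [DecidableRel G.Adj] (A U : Finset V) :
    edgeCount G A = edgeCount G (A \ U) + (remEdges G A U).card := by
  unfold edgeCount remEdges
  have h1 : (G.edgeFinset.filter fun e => ∀ x ∈ e, x ∈ A \ U)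
      = (G.edgeFinset.filter fun e => ∀ x ∈ e, x ∈ A).filter
          fun e => ¬ ∃ x ∈ e, x ∈ U := by
    rw [filter_filter]
    apply filter_congr
    intro e _
    simp only [mem_sdiff, not_exists, not_and]
    constructor
    · intro h; exact ⟨fun x hx => (h x hx).1, fun x hx => (h x hx).2⟩
    · intro h x hx; exact ⟨h.1 x hx, h.2 x hx⟩
  have h2 : (G.edgeFinset.filter fun e => (∀ x ∈ e, x ∈ A) ∧ ∃ x ∈ e, x ∈ U)
      = (G.edgeFinset.filter fun e => ∀ x ∈ e, x ∈ A).filter fun e => ∃ x ∈ e, x ∈ U := by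
    rw [filter_filter]
  rw [h1, h2, add_comm, card_filter_add_card_filter_not]

lemma reach_in_union {G : SimpleGraph V} {A : Finset V} {W : Finset V} (hAW : A ⊆ W)
    {a b : V} (ha : a ∈ A) (hb : b ∈ A)
    (h : (G.induce (A : Set V)).Reachable ⟨a, ha⟩ ⟨b, hb⟩) :
    (G.induce (W : Set V)).Reachable ⟨a, hAW ha⟩ ⟨b, hAW hb⟩ := by
  exact h.map (⟨fun x => ⟨x.1, hAW x.2⟩, fun {p q} h => h⟩ :
    G.induce (A : Set V) →g G.induce (W : Set V))

lemma connected_union {G : SimpleGraph V} {S T : Finset V} {u v : V}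
    (hS : (G.induce (S : Set V)).Connected) (hT : (G.induce (T : Set V)).Connected)
    (hu : u ∈ S) (hv : v ∈ T) (hadj : G.Adj u v) :
    (G.induce ((S ∪ T : Finset V) : Set V)).Connected := by
  have hSW : S ⊆ S ∪ T := subset_union_left
  have hTW : T ⊆ S ∪ T := subset_union_right
  have huW : u ∈ S ∪ T := hSW hu
  have key : ∀ x : ((S ∪ T : Finset V) : Set V),
      (G.induce ((S ∪ T : Finset V) : Set V)).Reachable x ⟨u, huW⟩ := by
    rintro ⟨x, hx⟩
    have hx' : x ∈ S ∪ T := hx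
    rcases mem_union.mp hx' with hxS | hxT
    · exact reach_in_union hSW hxS hu (hS.preconnected _ _)
    · have r1 : (G.induce ((S ∪ T : Finset V) : Set V)).Reachable ⟨x, hTW hxT⟩ ⟨v, hTW hv⟩ :=
        reach_in_union hTW hxT hv (hT.preconnected _ _)
      have r2 : (G.induce ((S ∪ T : Finset V) : Set V)).Adj ⟨v, hTW hv⟩ ⟨u, huW⟩ := hadj.symm
      exact r1.trans r2.reachable
  haveI : Nonempty ((S ∪ T : Finset V) : Set V) := ⟨⟨u, huW⟩⟩
  exact SimpleGraph.Connected.mk fun a b => (key a).trans (key b).symm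

lemma le_compactNum (G : SimpleGraph V) [DecidableRel G.Adj] {u : V} {ρ : ℝ} {S : Finset V}
    (hu : u ∈ S) (hc : IsCompactSub G ρ S) : ρ ≤ compactNum G u := by
  apply le_csSup
  · refine ⟨(G.edgeFinset.card : ℝ), ?_⟩
    rintro ρ₀ ⟨S₀, hu₀, h0, _, hrem⟩
    have hS₀ : S₀.Nonempty := ⟨u, hu₀⟩
    have h1 := hrem S₀ (subset_refl _) hS₀
    have hE : (edgeCount G S₀ : ℝ) ≤ (G.edgeFinset.card : ℝ) := by
      exact_mod_cast card_filter_le _ _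
    have hmono : (0:ℝ) ≤ (edgeCount G (S₀ \ S₀) : ℝ) := by positivity
    have hcard : (1:ℝ) ≤ (S₀.card : ℝ) := by exact_mod_cast card_pos.mpr hS₀
    nlinarith
  · exact ⟨S, hu, hc⟩

lemma zero_compact_singleton (G : SimpleGraph V) [DecidableRel G.Adj] (v : V) :
    IsCompactSub G 0 ({v} : Finset V) := by
  refine ⟨le_refl 0, ?_, ?_⟩
  · haveI : Nonempty (({v} : Finset V) : Set V) := ⟨⟨v, mem_singleton_self v⟩⟩
    exact SimpleGraph.Connected.mk fun a b => by
      have : a = b := Subtype.ext (by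
        have ha := a.2; have hb := b.2
        simp only [coe_singleton, Set.mem_singleton_iff] at ha hb
        rw [ha, hb])
      rw [this]
  · intro U hU hUne
    have h := edgeCount_mono G (sdiff_subset : ({v} : Finset V) \ U ⊆ {v})
    have h' : (edgeCount G (({v} : Finset V) \ U) : ℝ) ≤ edgeCount G ({v} : Finset V) := by
      exact_mod_cast h
    simp only [zero_mul]
    linarith

/-- Pruning rule 1: if `u` has a neighbor `v` with strictly
larger compact number, then `u` is in no LDS. -/
theorem pruning_rule_one (G : SimpleGraph V) [DecidableRel G.Adj]
    (u v : V) (hadj : G.Adj u v) (hlt : compactNum G v > compactNum G u) :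
    ∀ S : Finset V, IsLDS G S → u ∉ S := by
  intro S hLDS huS
  obtain ⟨hSc, hmax⟩ := hLDS
  set ρ := density G S with hρdef
  have hρu : ρ ≤ compactNum G u := le_compactNum G huS hSc
  have hvset : (0:ℝ) ∈ {ρ : ℝ | ∃ T : Finset V, v ∈ T ∧ IsCompactSub G ρ T} :=
    ⟨{v}, mem_singleton_self v, zero_compact_singleton G v⟩
  obtain ⟨ρ', hρ'mem, hρ'gt⟩ := exists_lt_of_lt_csSup ⟨0, hvset⟩ hlt
  obtain ⟨T, hvT, hTc⟩ := hρ'mem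
  have huT : u ∉ T := fun h => absurd (le_compactNum G h hTc) (not_le.mpr hρ'gt)
  have hρρ' : ρ < ρ' := lt_of_le_of_lt hρu hρ'gt
  have hρ0 : 0 ≤ ρ := hSc.1
  have hunion : IsCompactSub G ρ (S ∪ T) := by
    refine ⟨hρ0, connected_union hSc.2.1 hTc.2.1 huS hvT hadj, ?_⟩
    intro U hU hUne
    have key : (edgeCount G (S ∪ T) : ℝ) - (edgeCount G ((S ∪ T) \ U) : ℝ)
        = ((remEdges G (S ∪ T) U).card : ℝ) := by
      have h := edgeCount_sdiff G (S ∪ T) U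
      push_cast [h]; ring
    rw [key]
    have hsub : remEdges G T (U ∩ T) ∪ remEdges G S (U \ T) ⊆ remEdges G (S ∪ T) U := by
      intro e he
      simp only [remEdges, mem_union, mem_filter] at he ⊢
      rcases he with ⟨he1, h2, x, hx, hxU⟩ | ⟨he1, h2, x, hx, hxU⟩
      · exact ⟨he1, fun y hy => Or.inr (h2 y hy), x, hx, (mem_inter.mp hxU).1⟩
      · exact ⟨he1, fun y hy => Or.inl (h2 y hy), x, hx, (mem_sdiff.mp hxU).1⟩
    have hdisj : Disjoint (remEdges G T (U ∩ T)) (remEdges G S (U \ T)) := by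
      rw [disjoint_left]
      intro e he1 he2
      simp only [remEdges, mem_filter] at he1 he2
      obtain ⟨_, hT2, _⟩ := he1
      obtain ⟨_, _, x, hx, hxU⟩ := he2
      exact (mem_sdiff.mp hxU).2 (hT2 x hx)
    have hcards : ((remEdges G T (U ∩ T)).card : ℝ) + ((remEdges G S (U \ T)).card : ℝ)
        ≤ ((remEdges G (S ∪ T) U).card : ℝ) := by
      have := card_le_card hsub
      rw [card_union_of_disjoint hdisj] at this
      exact_mod_cast this
    have hT_bound : ρ' * (((U ∩ T)).card : ℝ) ≤ ((remEdges G T (U ∩ T)).card : ℝ) := by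
      rcases (U ∩ T).eq_empty_or_nonempty with h | h
      · simp [h]
      · have h1 := hTc.2.2 (U ∩ T) inter_subset_right h
        have heq := edgeCount_sdiff G T (U ∩ T)
        push_cast [heq] at h1
        linarith
    have hS_bound : ρ * (((U \ T)).card : ℝ) ≤ ((remEdges G S (U \ T)).card : ℝ) := by
      rcases (U \ T).eq_empty_or_nonempty with h | h
      · simp [h]
      · have hsub2 : U \ T ⊆ S := by
          intro x hx
          rcases mem_union.mp (hU (mem_sdiff.mp hx).1) with h' | h'
          · exact h'
          · exact absurd h' (mem_sdiff.mp hx).2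
        have h1 := hSc.2.2 (U \ T) hsub2 h
        have heq := edgeCount_sdiff G S (U \ T)
        push_cast [heq] at h1
        linarith
    have hcardsplit : (U.card : ℝ) = ((U ∩ T).card : ℝ) + ((U \ T).card : ℝ) := by
      exact_mod_cast (card_inter_add_card_sdiff U T).symm
    have hnn : (0:ℝ) ≤ ((U ∩ T).card : ℝ) := by positivity
    nlinarith
  by_cases hTS : T ⊆ S
  · have hSTne : (S \ T).Nonempty := ⟨u, mem_sdiff.mpr ⟨huS, huT⟩⟩
    have h1 := hSc.2.2 (S \ T) sdiff_subset hSTne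
    have hSdT : S \ (S \ T) = T := by
      rw [sdiff_sdiff_self_left]; exact inter_eq_right.mpr hTS
    rw [hSdT] at h1
    have h2 := hTc.2.2 T (subset_refl T) ⟨v, hvT⟩
    have h3 : (0:ℝ) ≤ (edgeCount G (T \ T) : ℝ) := by positivity
    have hTcard : (1:ℝ) ≤ (T.card : ℝ) := by exact_mod_cast card_pos.mpr ⟨v, hvT⟩
    have hScard : (0:ℝ) < (S.card : ℝ) := by exact_mod_cast card_pos.mpr ⟨u, huS⟩
    have hcards : ((S \ T).card : ℝ) + (T.card : ℝ) = (S.card : ℝ) := by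
      exact_mod_cast card_sdiff_add_card_eq_card hTS
    have hρS : ρ * (S.card : ℝ) = (edgeCount G S : ℝ) := by
      rw [hρdef]; unfold density; field_simp
    nlinarith
  · refine hmax (S ∪ T) ?_ hunion
    refine Finset.ssubset_iff_subset_ne.mpr ⟨subset_union_left, fun h => hTS ?_⟩
    intro x hx
    rw [h]
    exact subset_union_right hx
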